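/- Let k ≥ 2 and let y ∈ [0,1] be a rational number. Then there exist an integer d ≥ 1, entrywise-nonnegative d×d real matrices A_0,…,A_{k−1}, and entrywise-nonnegative vectors u, v ∈ ℝ^d such that, setting f(n) := uᵀ A_{(n)_k} v for n ≥ 0, one has f(n) ≥ 0 for all n, Σ_f(N) > 0 for all N ≥ 0, and the probability measures μ_N converge weakly, as N → ∞, to the Dirac measure δ_y. -/

import Mathlib

open Matrix Filter Topology MeasureTheory

/-- The matrix `A_{(n)_k} = A_{i_s} ⋯ A_{i_1} A_{i_0}`, where `i_s ⋯ i_1 i_0` is the base-`k`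
expansion of `n` (with `A_{(0)_k}` the identity matrix). -/
noncomputable def repMat {d : ℕ} (k : ℕ) (A : ℕ → Matrix (Fin d) (Fin d) ℝ) (n : ℕ) :
    Matrix (Fin d) (Fin d) ℝ :=
  ((Nat.digits k n).map A).foldl (fun acc M => M * acc) 1

/-- `Σ_f(N) = ∑_{m=k^N}^{k^{N+1}-1} f(m)`. -/
noncomputable def sigmaF (k : ℕ) (f : ℕ → ℝ) (N : ℕ) : ℝ :=
  ∑ m ∈ Finset.Ico (k ^ N) (k ^ (N + 1)), f m

/-- The ghost measure approximant
`μ_N = Σ_f(N)⁻¹ ∑_{m=0}^{k^{N+1}-k^N-1} f(k^N + m) δ_{m/(k^N (k-1))}`. -/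
noncomputable def ghostApprox (k : ℕ) (f : ℕ → ℝ) (N : ℕ) : Measure ℝ :=
  (ENNReal.ofReal (sigmaF k f N))⁻¹ •
    ∑ m ∈ Finset.range (k ^ (N + 1) - k ^ N),
      ENNReal.ofReal (f (k ^ N + m)) •
        Measure.dirac ((m : ℝ) / ((k : ℝ) ^ N * ((k : ℝ) - 1)))

/-- target integers -/
def nseq (k : ℕ) (a : ℕ → ℕ) : ℕ → ℕ
  | 0 => a 0
  | N + 1 => k * nseq k a N + a (N + 1)

/-- the reversed digit word -/
def wrd (a : ℕ → ℕ) : ℕ → List ℕ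
  | 0 => []
  | m + 1 => a m :: wrd a m

lemma wrd_length (a : ℕ → ℕ) : ∀ m, (wrd a m).length = m
  | 0 => rfl
  | m + 1 => by simp [wrd, wrd_length a m]

def adig (k e qd : ℕ) : ℕ → ℕ
  | 0 => e / qd
  | j + 1 => (k * ((e * k ^ j) % qd)) / qd

def sucN (i0 p j : ℕ) : ℕ := if j + 1 < i0 + p then j + 1 else i0

def PN (i0 p m : ℕ) : ℕ := (sucN i0 p)^[m] 0

lemma PN_succ (i0 p m : ℕ) : PN i0 p (m+1) = sucN i0 p (PN i0 p m) :=
  Function.iterate_succ_apply' _ _ _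

lemma PN_lt (i0 p : ℕ) (hp : 1 ≤ p) (m : ℕ) : PN i0 p m < i0 + p := by
  induction m with
  | zero => simp [PN]; omega
  | succ m ih => rw [PN_succ]; unfold sucN; split <;> omega

lemma nseq_lower {k : ℕ} (hk : 2 ≤ k) (a : ℕ → ℕ) (ha0 : 1 ≤ a 0) (N : ℕ) :
    k ^ N ≤ nseq k a N := by
  induction N with
  | zero => simpa [nseq] using ha0
  | succ N ih =>
    have : k ^ N * k ≤ nseq k a N * k := Nat.mul_le_mul_right _ ih
    simp only [nseq, pow_succ]
    nlinarith

lemma nseq_upper {k : ℕ} (hk : 2 ≤ k) (a : ℕ → ℕ) (ha : ∀ j, a j < k) (N : ℕ) :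
    nseq k a N < k ^ (N + 1) := by
  induction N with
  | zero => simpa [nseq] using ha 0
  | succ N ih =>
    have h1 : a (N+1) < k := ha (N+1)
    have : k * nseq k a N + a (N+1) < k * k ^ (N+1) := by nlinarith
    simpa [nseq, pow_succ, mul_comm] using this

lemma digits_nseq {k : ℕ} (hk : 2 ≤ k) (a : ℕ → ℕ) (ha : ∀ j, a j < k) (ha0 : 1 ≤ a 0)
    (N : ℕ) : Nat.digits k (nseq k a N) = wrd a (N + 1) := by
  induction N with
  | zero =>
    rw [show nseq k a 0 = a 0 from rfl,
      Nat.digits_def' (by omega : 1 < k) (by omega : 0 < a 0)]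
    rw [Nat.mod_eq_of_lt (ha 0), Nat.div_eq_of_lt (ha 0)]
    simp [wrd]
  | succ N ih =>
    have hpos : 0 < nseq k a (N+1) := by
      have := nseq_lower hk a ha0 (N+1)
      have := Nat.one_le_two_pow (n := N+1)
      have : 1 ≤ k ^ (N+1) := Nat.one_le_pow _ _ (by omega)
      omega
    rw [show nseq k a (N+1) = k * nseq k a N + a (N+1) from rfl] at hpos ⊢
    rw [Nat.digits_def' (by omega : 1 < k) hpos]
    have h1 : (k * nseq k a N + a (N+1)) % k = a (N+1) := by
      rw [Nat.mul_add_mod]; exact Nat.mod_eq_of_lt (ha (N+1))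
    have h2 : (k * nseq k a N + a (N+1)) / k = nseq k a N := by
      rw [Nat.mul_add_div (by omega : 0 < k), Nat.div_eq_of_lt (ha (N+1))]; omega
    rw [h1, h2, ih]
    rfl

section
variable {i0 p : ℕ} (hp : 1 ≤ p) (a : ℕ → ℕ) (hper : ∀ j, i0 ≤ j → a (j + p) = a j)

include hper in
lemma per_add : ∀ t j, i0 ≤ j → a (j + t * p) = a j := by
  intro t
  induction t with
  | zero => simp
  | succ t ih =>
    intro j hj
    have : j + (t+1) * p = (j + t * p) + p := by ring
    rw [this, hper _ (by omega), ih j hj]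

include hper in
lemma per_mod (t : ℕ) : a (i0 + t) = a (i0 + t % p) := by
  conv_lhs => rw [show i0 + t = (i0 + t % p) + (t / p) * p by
    have := Nat.mod_add_div' t p; omega]
  rw [per_add a hper _ _ (by omega)]

include hper in
lemma per_eq {x y : ℕ} (hx : i0 ≤ x) (hy : i0 ≤ y)
    (hxy : (x - i0) % p = (y - i0) % p) : a x = a y := by
  have h1 : a x = a (i0 + (x - i0) % p) := by
    rw [← per_mod a hper]; congr 1; omega
  have h2 : a y = a (i0 + (y - i0) % p) := by
    rw [← per_mod a hper]; congr 1; omega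
  rw [h1, h2, hxy]

include hp hper in
lemma a_PN (m : ℕ) : a (PN i0 p m) = a m := by
  suffices h : PN i0 p m = m ∨
      (i0 ≤ PN i0 p m ∧ i0 ≤ m ∧ (PN i0 p m - i0) % p = (m - i0) % p) by
    rcases h with h | ⟨h1, h2, h3⟩
    · rw [h]
    · exact per_eq a hper h1 h2 h3
  induction m with
  | zero => left; rfl
  | succ m ih =>
    have hlt : PN i0 p m < i0 + p := PN_lt i0 p hp m
    rw [PN_succ]
    unfold sucN
    rcases ih with h | ⟨h1, h2, h3⟩ <;> split
    · left; omega
    · right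
      refine ⟨le_refl _, by omega, ?_⟩
      have hm : m + 1 - i0 = p := by omega
      simp [hm]
    · right
      refine ⟨by omega, by omega, ?_⟩
      have e1 : PN i0 p m + 1 - i0 = (PN i0 p m - i0) + 1 := by omega
      have e2 : m + 1 - i0 = (m - i0) + 1 := by omega
      rw [e1, e2, Nat.add_mod, h3, ← Nat.add_mod]
    · right
      refine ⟨le_refl _, by omega, ?_⟩
      have hs : (m - i0) % p = p - 1 := by
        rw [← h3]; have : PN i0 p m - i0 = p - 1 := by omega
        rw [this, Nat.mod_eq_of_lt (by omega)]
      have e2 : m + 1 - i0 = (m - i0) + 1 := by omega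
      rw [e2, Nat.add_mod, hs]
      simp [Nat.sub_add_cancel hp]
end

noncomputable def Amat (i0 p : ℕ) (a : ℕ → ℕ) (c : ℕ) :
    Matrix (Fin (i0+p)) (Fin (i0+p)) ℝ :=
  Matrix.of fun t x => if sucN i0 p t = (x : ℕ) ∧ a t = c then 1 else 0

def uvec (i0 p : ℕ) : Fin (i0+p) → ℝ := fun x => if (x : ℕ) = 0 then 1 else 0

noncomputable def wmat {d : ℕ} (A : ℕ → Matrix (Fin d) (Fin d) ℝ) (l : List ℕ) :
    Matrix (Fin d) (Fin d) ℝ := (l.map A).foldl (fun acc M => M * acc) 1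

lemma foldl_mul {d : ℕ} (l : List (Matrix (Fin d) (Fin d) ℝ))
    (M : Matrix (Fin d) (Fin d) ℝ) :
    l.foldl (fun acc X => X * acc) M = l.foldl (fun acc X => X * acc) 1 * M := by
  induction l generalizing M with
  | nil => simp
  | cons x t ih =>
    simp only [List.foldl_cons]
    rw [ih (x * M), ih (x * 1), mul_one, mul_assoc]

lemma wmat_cons {d : ℕ} (A : ℕ → Matrix (Fin d) (Fin d) ℝ) (c : ℕ) (l : List ℕ) :
    wmat A (c :: l) = wmat A l * A c := by
  unfold wmat
  simp only [List.map_cons, List.foldl_cons]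
  rw [foldl_mul, mul_one]

lemma uW {i0 p : ℕ} (hp : 1 ≤ p) (a : ℕ → ℕ) (hper : ∀ j, i0 ≤ j → a (j + p) = a j)
    (l : List ℕ) :
    uvec i0 p ᵥ* wmat (Amat i0 p a) l =
      fun x : Fin (i0+p) => if (x : ℕ) = PN i0 p l.length ∧ l = wrd a l.length then (1:ℝ) else 0 := by
  induction l with
  | nil =>
    rw [show wmat (Amat i0 p a) [] = 1 from rfl, Matrix.vecMul_one]
    funext x
    simp [uvec, PN, wrd]
  | cons c l ih =>
    rw [wmat_cons, ← Matrix.vecMul_vecMul, ih]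
    funext x
    rw [Matrix.vecMul, dotProduct]
    simp only [Amat, Matrix.of_apply]
    set m := l.length
    set t0 : Fin (i0+p) := ⟨PN i0 p m, PN_lt i0 p hp m⟩ with ht0
    have key : ∀ t : Fin (i0+p),
        (if (t : ℕ) = PN i0 p m ∧ l = wrd a m then (1:ℝ) else 0) *
          (if sucN i0 p t = (x : ℕ) ∧ a t = c then 1 else 0) =
        if t = t0 then
          (if l = wrd a m ∧ sucN i0 p (PN i0 p m) = (x : ℕ) ∧ a (PN i0 p m) = c
            then 1 else 0) else 0 := by
      intro t
      have hiff : (t : ℕ) = PN i0 p m ↔ t = t0 := by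
        rw [Fin.ext_iff]
      by_cases h : t = t0
      · have hv : (t : ℕ) = PN i0 p m := hiff.mpr h
        simp only [hv, h, if_pos rfl, true_and]
        by_cases h1 : l = wrd a m <;> by_cases h2 : sucN i0 p (PN i0 p m) = (x:ℕ) ∧ a (PN i0 p m) = c <;>
          simp [h1, h2, ht0]
      · have hv : ¬ ((t : ℕ) = PN i0 p m) := fun hc => h (hiff.mp hc)
        simp [hv, h]
    rw [Finset.sum_congr rfl (fun t _ => key t)]
    rw [Finset.sum_ite_eq' Finset.univ t0]
    rw [if_pos (Finset.mem_univ _)]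
    have hsuc : sucN i0 p (PN i0 p m) = PN i0 p (m+1) := (PN_succ i0 p m).symm
    have haa : a (PN i0 p m) = a m := a_PN hp a hper m
    rw [hsuc, haa]
    simp only [List.length_cons]
    have hiff2 : (l = wrd a m ∧ PN i0 p (m+1) = (x:ℕ) ∧ a m = c) ↔
        ((x:ℕ) = PN i0 p (m+1) ∧ c :: l = wrd a (m+1)) := by
      simp only [wrd, List.cons_eq_cons]
      constructor
      · rintro ⟨hl, hx, hc⟩; exact ⟨hx.symm, hc.symm, hl⟩
      · rintro ⟨hx, hc, hl⟩; exact ⟨hl, hx.symm, hc.symm⟩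
    rw [if_congr hiff2 rfl rfl]

lemma f_eq {i0 p : ℕ} (hp : 1 ≤ p) (a : ℕ → ℕ) (hper : ∀ j, i0 ≤ j → a (j + p) = a j)
    (l : List ℕ) :
    uvec i0 p ᵥ* (wmat (Amat i0 p a) l) ⬝ᵥ (fun _ => (1:ℝ)) =
      if l = wrd a l.length then 1 else 0 := by
  rw [uW hp a hper, dotProduct]
  set m := l.length
  set t0 : Fin (i0+p) := ⟨PN i0 p m, PN_lt i0 p hp m⟩ with ht0
  have key : ∀ x : Fin (i0+p),
      (if (x : ℕ) = PN i0 p m ∧ l = wrd a m then (1:ℝ) else 0) * 1 =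
        if x = t0 then (if l = wrd a m then (1:ℝ) else 0) else 0 := by
    intro x
    have hiff : (x : ℕ) = PN i0 p m ↔ x = t0 := by rw [Fin.ext_iff]
    by_cases h : x = t0
    · simp [h, hiff.mpr h, ht0]
    · have : ¬((x:ℕ) = PN i0 p m) := fun hc => h (hiff.mp hc)
      simp [h, this]
  rw [Finset.sum_congr rfl (fun x _ => key x), Finset.sum_ite_eq' Finset.univ t0,
    if_pos (Finset.mem_univ _)]

lemma pow_inv_tendsto {k : ℕ} (hk : 2 ≤ k) :
    Tendsto (fun N : ℕ => ((k:ℝ)^N)⁻¹) atTop (𝓝 0) := by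
  have h1 : (1:ℝ) < (k:ℝ) := by exact_mod_cast (by omega : 1 < k)
  exact tendsto_inv_atTop_zero.comp (tendsto_pow_atTop_atTop_of_one_lt h1)

-- y = 1 case
lemma nseq_const {k : ℕ} (hk : 2 ≤ k) : ∀ N, nseq k (fun _ => k - 1) N = k ^ (N+1) - 1 := by
  intro N
  induction N with
  | zero => show k - 1 = k ^ 1 - 1; rw [pow_one]
  | succ N ih =>
    show k * nseq k (fun _ => k - 1) N + (k - 1) = k ^ (N+2) - 1
    rw [ih]
    have h1 : 1 ≤ k ^ (N+1) := Nat.one_le_pow _ _ (by omega)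
    obtain ⟨x, hx⟩ : ∃ x, k ^ (N+1) = x + 1 := ⟨k ^ (N+1) - 1, by omega⟩
    have h2 : k ^ (N+2) = k * (x + 1) := by rw [← hx]; ring
    have h3 : k * (x + 1) = k * x + k := by ring
    rw [hx, h2, h3]
    simp only [Nat.add_sub_cancel]
    omega

lemma htend_const {k : ℕ} (hk : 2 ≤ k) :
    Tendsto (fun N => ((nseq k (fun _ => k - 1) N : ℕ) : ℝ) / (k:ℝ)^N) atTop
      (𝓝 (1 + 1 * ((k:ℝ)-1))) := by
  have hkpos : (0:ℝ) < (k:ℝ) := by exact_mod_cast (by omega : 0 < k)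
  have heq : (fun N => ((nseq k (fun _ => k - 1) N : ℕ) : ℝ) / (k:ℝ)^N) =
      fun N => (k:ℝ) - ((k:ℝ)^N)⁻¹ := by
    funext N
    rw [nseq_const hk N]
    have h1 : 1 ≤ k ^ (N+1) := Nat.one_le_pow _ _ (by omega)
    rw [Nat.cast_sub h1]
    push_cast
    have hp : ((k:ℝ)^N) ≠ 0 := (pow_pos hkpos N).ne'
    field_simp
    ring
  rw [heq]
  have := tendsto_const_nhds (x := (k:ℝ)) (f := atTop (α := ℕ))
  have hlim := this.sub (pow_inv_tendsto hk)
  simpa using hlim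

section Rat
variable {k e qd : ℕ} (hk : 2 ≤ k) (hq : 1 ≤ qd) (he : qd ≤ e) (helt : e < qd * k)

include hk hq he helt in
lemma adig_lt : ∀ j, adig k e qd j < k := by
  intro j
  cases j with
  | zero =>
    show e / qd < k
    rw [Nat.div_lt_iff_lt_mul (by omega)]
    calc e < qd * k := helt
      _ = k * qd := Nat.mul_comm qd k
  | succ j =>
    show (k * ((e * k ^ j) % qd)) / qd < k
    rw [Nat.div_lt_iff_lt_mul (by omega)]
    have hm : (e * k ^ j) % qd < qd := Nat.mod_lt _ (by omega)
    exact mul_lt_mul_of_pos_left hm (by omega)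
  
include hq he in
lemma adig_one : 1 ≤ adig k e qd 0 := by
  show 1 ≤ e / qd
  rw [Nat.one_le_div_iff (by omega)]
  exact he

include hq in
lemma nseq_adig : ∀ N, nseq k (adig k e qd) N = (e * k ^ N) / qd := by
  intro N
  induction N with
  | zero => show e / qd = (e * k ^ 0) / qd; rw [pow_zero, mul_one]
  | succ N ih =>
    show k * nseq k (adig k e qd) N + (k * ((e * k ^ N) % qd)) / qd = (e * k ^ (N+1)) / qd
    rw [ih]
    set X := e * k ^ N with hX
    have hX1 : e * k ^ (N+1) = k * X := by rw [hX]; ring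
    have h1 : k * X = qd * (k * (X / qd)) + k * (X % qd) := by
      conv_lhs => rw [← Nat.div_add_mod X qd]
      ring
    rw [hX1, h1, Nat.mul_add_div (by omega)]

lemma rmod_succ (j : ℕ) : (e * k ^ (j+1)) % qd = (k * ((e * k ^ j) % qd)) % qd := by
  conv_lhs => rw [show e * k ^ (j+1) = k * (e * k ^ j) by ring]
  rw [Nat.mul_mod, Nat.mul_mod k ((e * k ^ j) % qd), Nat.mod_mod_of_dvd _ dvd_rfl]

include hq in
lemma adig_period : ∃ i0 p, 1 ≤ p ∧
    ∀ j, i0 ≤ j → adig k e qd (j + p) = adig k e qd j := by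
  obtain ⟨i, hi, i', hi', hne, heqr⟩ :=
    Finset.exists_ne_map_eq_of_card_lt_of_maps_to
      (s := Finset.range (qd+1)) (t := Finset.range qd)
      (by simp) (fun j _ => Finset.mem_range.mpr (Nat.mod_lt (e * k ^ j) (by omega)))
  have hkey : ∃ i i', i < i' ∧ (e * k ^ i) % qd = (e * k ^ i') % qd := by
    rcases lt_or_gt_of_ne hne with h | h
    · exact ⟨i, i', h, heqr⟩
    · exact ⟨i', i, h, heqr.symm⟩
  obtain ⟨i, i', hlt, heq⟩ := hkey
  refine ⟨i + 1, i' - i, by omega, ?_⟩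
  have hrper : ∀ j, i ≤ j → (e * k ^ (j + (i' - i))) % qd = (e * k ^ j) % qd := by
    intro j hj
    induction j, hj using Nat.le_induction with
    | base =>
      rw [show i + (i' - i) = i' by omega]
      exact heq.symm
    | succ j hj ih =>
      rw [show j + 1 + (i' - i) = (j + (i' - i)) + 1 by omega, rmod_succ, ih, ← rmod_succ]
  intro j hj
  obtain ⟨j', rfl⟩ : ∃ j', j = j' + 1 := ⟨j - 1, by omega⟩
  rw [show j' + 1 + (i' - i) = (j' + (i' - i)) + 1 by omega]
  show (k * ((e * k ^ (j' + (i' - i))) % qd)) / qd = (k * ((e * k ^ j') % qd)) / qd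
  rw [hrper j' (by omega)]

include hk hq in
lemma htend_adig :
    Tendsto (fun N => ((nseq k (adig k e qd) N : ℕ) : ℝ) / (k:ℝ)^N) atTop
      (𝓝 ((e:ℝ) / (qd:ℝ))) := by
  have hkpos : (0:ℝ) < (k:ℝ) := by exact_mod_cast (by omega : 0 < k)
  have hq0 : (0:ℝ) < (qd:ℝ) := by exact_mod_cast (by omega : 0 < qd)
  have hub : ∀ N : ℕ, ((nseq k (adig k e qd) N : ℕ) : ℝ) / (k:ℝ)^N ≤ (e:ℝ) / qd := by
    intro N
    rw [nseq_adig hq N]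
    have hp0 : (0:ℝ) < (k:ℝ)^N := pow_pos hkpos N
    have h1 : ((e * k ^ N / qd : ℕ) : ℝ) ≤ ((e:ℝ) * (k:ℝ)^N) / qd := by
      have := Nat.cast_div_le (m := e * k ^ N) (n := qd) (α := ℝ)
      push_cast at this
      exact this
    calc ((e * k ^ N / qd : ℕ) : ℝ) / (k:ℝ)^N ≤ ((e:ℝ) * (k:ℝ)^N / qd) / (k:ℝ)^N := by
          gcongr
      _ = (e:ℝ) / qd := by field_simp
  have hlb : ∀ N : ℕ, (e:ℝ) / qd - ((k:ℝ)^N)⁻¹ ≤ ((nseq k (adig k e qd) N : ℕ) : ℝ) / (k:ℝ)^N := by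
    intro N
    rw [nseq_adig hq N]
    have hp0 : (0:ℝ) < (k:ℝ)^N := pow_pos hkpos N
    have h1 : e * k ^ N < qd * (e * k ^ N / qd) + qd := by
      have h2 := Nat.div_add_mod (e * k ^ N) qd
      have h3 := Nat.mod_lt (e * k ^ N) (show 0 < qd by omega)
      omega
    have h1' : (e:ℝ) * (k:ℝ)^N ≤ (qd:ℝ) * (((e * k ^ N / qd : ℕ):ℝ) + 1) := by
      have h4 : ((e * k ^ N : ℕ) : ℝ) ≤ ((qd * (e * k ^ N / qd) + qd : ℕ) : ℝ) := by
        exact_mod_cast h1.le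
      push_cast at h4
      linarith
    rw [sub_le_iff_le_add]
    have hsum : ((e * k ^ N / qd : ℕ):ℝ) / (k:ℝ)^N + ((k:ℝ)^N)⁻¹ =
        (((e * k ^ N / qd : ℕ):ℝ) + 1) / (k:ℝ)^N := by
      rw [inv_eq_one_div, ← add_div]
    rw [hsum, div_le_div_iff₀ hq0 hp0]
    linarith
  refine tendsto_of_tendsto_of_tendsto_of_le_of_le ?_ ?_ (fun N => hlb N) (fun N => hub N)
  · have := (tendsto_const_nhds (x := (e:ℝ)/(qd:ℝ)) (f := atTop (α := ℕ))).sub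
      (pow_inv_tendsto hk)
    simpa using this
  · exact tendsto_const_nhds
end Rat

lemma main_aux {k : ℕ} (hk : 2 ≤ k) (y : ℝ) {i0 p : ℕ} (hp : 1 ≤ p) (a : ℕ → ℕ)
    (ha : ∀ j, a j < k) (ha0 : 1 ≤ a 0) (hper : ∀ j, i0 ≤ j → a (j + p) = a j)
    (htend : Tendsto (fun N => ((nseq k a N : ℕ) : ℝ) / (k:ℝ)^N) atTop
      (𝓝 (1 + y * ((k:ℝ)-1)))) :
    ∃ d : ℕ, 1 ≤ d ∧ ∃ A : ℕ → Matrix (Fin d) (Fin d) ℝ, ∃ u v : Fin d → ℝ,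
      (∀ i : ℕ, i < k → ∀ s t, 0 ≤ A i s t) ∧ (∀ i, 0 ≤ u i) ∧ (∀ i, 0 ≤ v i) ∧
      ∀ f : ℕ → ℝ, (∀ n : ℕ, f n = Matrix.vecMul u (repMat k A n) ⬝ᵥ v) →
        (∀ n : ℕ, 0 ≤ f n) ∧ (∀ N : ℕ, 0 < sigmaF k f N) ∧
        ∀ g : BoundedContinuousFunction ℝ ℝ,
          Tendsto (fun N => ∫ x, g x ∂(ghostApprox k f N)) atTop
            (𝓝 (∫ x, g x ∂(Measure.dirac y))) := by
  have hlow := nseq_lower hk a ha0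
  have hup := nseq_upper hk a ha
  refine ⟨i0 + p, by omega, Amat i0 p a, uvec i0 p, (fun _ => 1), ?_, ?_, ?_, ?_⟩
  · intro i _ s t
    simp only [Amat, Matrix.of_apply]
    split <;> norm_num
  · intro i; simp only [uvec]; split <;> norm_num
  · intro i; norm_num
  intro f hf
  have fval : ∀ n, f n = if Nat.digits k n = wrd a (Nat.digits k n).length then 1 else 0 := by
    intro n; rw [hf n]; exact f_eq hp a hper _
  have hblock : ∀ N n, k ^ N ≤ n → n < k ^ (N+1) →
      f n = if n = nseq k a N then 1 else 0 := by
    intro N n h1 h2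
    have hpow1 : 1 ≤ k ^ N := Nat.one_le_pow _ _ (by omega)
    have hn0 : n ≠ 0 := by omega
    have hlen : (Nat.digits k n).length = N + 1 := by
      rw [Nat.digits_len k n (by omega) hn0, Nat.log_eq_of_pow_le_of_lt_pow h1 h2]
    by_cases he : n = nseq k a N
    · rw [if_pos he, he, fval, digits_nseq hk a ha ha0 N, wrd_length]; simp
    · rw [if_neg he, fval, hlen]
      by_cases hd : Nat.digits k n = wrd a (N+1)
      · exfalso
        apply he
        have h3 := Nat.ofDigits_digits k n
        rw [hd] at h3
        have h4 := Nat.ofDigits_digits k (nseq k a N)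
        rw [digits_nseq hk a ha ha0 N] at h4
        rw [← h3, h4]
      · rw [if_neg hd]
  have sigma_one : ∀ N, sigmaF k f N = 1 := by
    intro N
    unfold sigmaF
    have hcg : ∑ m ∈ Finset.Ico (k ^ N) (k ^ (N+1)), f m =
        ∑ m ∈ Finset.Ico (k ^ N) (k ^ (N+1)), (if m = nseq k a N then (1:ℝ) else 0) :=
      Finset.sum_congr rfl (fun n hn => by
        rw [Finset.mem_Ico] at hn; exact hblock N n hn.1 hn.2)
    rw [hcg, Finset.sum_ite_eq' (Finset.Ico _ _) (nseq k a N) (fun _ => (1:ℝ))]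
    exact if_pos (Finset.mem_Ico.mpr ⟨hlow N, hup N⟩)
  refine ⟨?_, ?_, ?_⟩
  · intro n; rw [fval]; split <;> norm_num
  · intro N; rw [sigma_one]; norm_num
  intro g
  have ghost_eq : ∀ N, ghostApprox k f N =
      Measure.dirac (((nseq k a N - k ^ N : ℕ) : ℝ) / ((k:ℝ)^N * ((k:ℝ)-1))) := by
    intro N
    unfold ghostApprox
    rw [sigma_one N, ENNReal.ofReal_one, inv_one, one_smul]
    have hmem : nseq k a N - k ^ N ∈ Finset.range (k ^ (N+1) - k ^ N) := by
      rw [Finset.mem_range]; have := hup N; have := hlow N; omega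
    have key : ∀ m' ∈ Finset.range (k ^ (N+1) - k ^ N),
        ENNReal.ofReal (f (k ^ N + m')) •
            Measure.dirac ((m' : ℝ) / ((k:ℝ)^N * ((k:ℝ)-1))) =
          if m' = nseq k a N - k ^ N then
            Measure.dirac ((m' : ℝ) / ((k:ℝ)^N * ((k:ℝ)-1))) else 0 := by
      intro m' hm'
      rw [Finset.mem_range] at hm'
      rw [hblock N (k ^ N + m') (by omega) (by omega)]
      have hiff : k ^ N + m' = nseq k a N ↔ m' = nseq k a N - k ^ N := by
        have := hlow N; omega
      by_cases h : m' = nseq k a N - k ^ N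
      · rw [if_pos h, if_pos (hiff.mpr h), ENNReal.ofReal_one, one_smul]
      · rw [if_neg h, if_neg (fun hc => h (hiff.mp hc)), ENNReal.ofReal_zero, zero_smul]
    rw [Finset.sum_congr rfl key, Finset.sum_ite_eq' _ (nseq k a N - k ^ N), if_pos hmem]
  have hk1 : ((k:ℝ) - 1) ≠ 0 := by
    have : (2:ℝ) ≤ (k:ℝ) := by exact_mod_cast hk
    linarith
  have hkpow : ∀ N : ℕ, ((k:ℝ))^N ≠ 0 := by
    intro N
    have h0 : (0:ℝ) < (k:ℝ) := by
      have : 0 < k := by omega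
      exact_mod_cast this
    exact (pow_pos h0 N).ne'
  have hx : Tendsto (fun N => ((nseq k a N - k ^ N : ℕ) : ℝ) / ((k:ℝ)^N * ((k:ℝ)-1)))
      atTop (𝓝 y) := by
    have h : Tendsto (fun N => (((nseq k a N : ℕ) : ℝ) / (k:ℝ)^N - 1) * (((k:ℝ)-1)⁻¹))
        atTop (𝓝 ((1 + y * ((k:ℝ)-1) - 1) * (((k:ℝ)-1)⁻¹))) :=
      (htend.sub (tendsto_const_nhds (x := (1:ℝ)))).mul_const (((k:ℝ)-1)⁻¹)
    have heq2 : (fun N => (((nseq k a N : ℕ) : ℝ) / (k:ℝ)^N - 1) * (((k:ℝ)-1)⁻¹)) =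
        fun N => ((nseq k a N - k ^ N : ℕ) : ℝ) / ((k:ℝ)^N * ((k:ℝ)-1)) := by
      funext N
      rw [Nat.cast_sub (hlow N)]
      push_cast
      field_simp
      try ring
    rw [heq2] at h
    have hval : (1 + y * ((k:ℝ)-1) - 1) * (((k:ℝ)-1)⁻¹) = y := by
      field_simp
      ring
    rwa [hval] at h
  have hint : (fun N => ∫ x, g x ∂(ghostApprox k f N)) =
      fun N => g (((nseq k a N - k ^ N : ℕ) : ℝ) / ((k:ℝ)^N * ((k:ℝ)-1))) := by
    funext N
    rw [ghost_eq N, integral_dirac]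
  rw [hint, integral_dirac]
  exact (g.continuous.tendsto y).comp hx


/-- for every rational `y ∈ [0,1]` there is a `k`-regular sequence given by
nonnegative matrices and nonnegative vectors whose ghost measure approximants converge
weakly to the Dirac measure `δ_y`. -/
theorem stmt16 {k : ℕ} (hk : 2 ≤ k) (y : ℝ) (hy : y ∈ Set.Icc (0 : ℝ) 1)
    (hyQ : ∃ q : ℚ, (q : ℝ) = y) :
    ∃ d : ℕ, 1 ≤ d ∧ ∃ A : ℕ → Matrix (Fin d) (Fin d) ℝ, ∃ u v : Fin d → ℝ,
      (∀ i : ℕ, i < k → ∀ s t, 0 ≤ A i s t) ∧ (∀ i, 0 ≤ u i) ∧ (∀ i, 0 ≤ v i) ∧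
      ∀ f : ℕ → ℝ, (∀ n : ℕ, f n = Matrix.vecMul u (repMat k A n) ⬝ᵥ v) →
        (∀ n : ℕ, 0 ≤ f n) ∧ (∀ N : ℕ, 0 < sigmaF k f N) ∧
        ∀ g : BoundedContinuousFunction ℝ ℝ,
          Tendsto (fun N => ∫ x, g x ∂(ghostApprox k f N)) atTop
            (𝓝 (∫ x, g x ∂(Measure.dirac y))) := by
  obtain ⟨hy0, hy1⟩ := hy
  obtain ⟨q, hq⟩ := hyQ
  by_cases h1 : y = 1
  · subst h1
    exact main_aux hk 1 (i0 := 0) (p := 1) le_rfl (fun _ => k - 1)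
      (fun j => by show k - 1 < k; omega) (by show 1 ≤ k - 1; omega) (fun j _ => rfl) (htend_const hk)
  · have hylt : y < 1 := lt_of_le_of_ne hy1 h1
    have hqd : 1 ≤ q.den := q.pos
    have hnum : (0:ℤ) ≤ q.num := by
      have hq0 : (0:ℚ) ≤ q := by
        rw [← Rat.cast_le (K := ℝ)]
        rw [Rat.cast_zero, hq]
        exact hy0
      exact Rat.num_nonneg.mpr hq0
    set c := q.num.toNat with hc
    set qd := q.den with hqdd
    have hcr : ((c:ℕ):ℝ) = ((q.num : ℤ) : ℝ) := by
      have h5 := Int.toNat_of_nonneg hnum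
      exact_mod_cast congrArg (fun z : ℤ => (z : ℝ)) h5
    have hyeq : y = (c:ℝ)/(qd:ℝ) := by
      rw [← hq, Rat.cast_def, hcr]
    have hqd0 : (0:ℝ) < (qd:ℝ) := by exact_mod_cast hqd
    have hcq : c < qd := by
      have h2 : (c:ℝ) < (qd:ℝ) := by
        rw [hyeq, div_lt_one hqd0] at hylt
        exact hylt
      exact_mod_cast h2
    set e := qd + c * (k - 1) with hedef
    have he : qd ≤ e := Nat.le_add_right _ _
    have helt : e < qd * k := by
      have h3 : c * (k-1) < qd * (k-1) :=
        Nat.mul_lt_mul_of_lt_of_le hcq (le_refl (k-1)) (by omega)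
      have h4 : qd * k = qd + qd * (k - 1) := by
        conv_lhs => rw [show k = (k - 1) + 1 by omega]
        ring
      omega
    obtain ⟨i0, p, hp, hper⟩ := adig_period (k := k) (e := e) (qd := qd) hqd
    have heq : (e:ℝ) / (qd:ℝ) = 1 + y * ((k:ℝ)-1) := by
      have hek : ((e:ℕ):ℝ) = (qd:ℝ) + (c:ℝ) * ((k:ℝ)-1) := by
        rw [hedef]
        push_cast [Nat.cast_sub (show 1 ≤ k by omega)]
        ring
      rw [hek, hyeq]
      field_simp
      try ring
    have ht := htend_adig (k:=k) (e:=e) (qd:=qd) hk hqd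
    rw [heq] at ht
    exact main_aux hk y hp (adig k e qd) (adig_lt hk hqd he helt) (adig_one hqd he) hper ht
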